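/- For every x ∈ [0,1], the law of the random variable U·x + U·(1−U), where U is uniform on [0,1], is absolutely continuous with respect to Lebesgue measure on [0,1] with density φ_x given by φ_x(t) = ((1+x)² − 4t)^{−1/2} · (1_{[0,x)}(t) + 2·1_{[x,b_x)}(t)) for t ∈ [0,1]. -/

import Mathlib

open MeasureTheory Set
open scoped ENNReal

/-- The density `φ_x(t) = ((1+x)² − 4t)^{−1/2} · (1_{[0,x)}(t) + 2·1_{[x,b_x)}(t))`
with `b_x = ((1+x)/2)²`. -/
noncomputable def phi (x t : ℝ) : ℝ :=
  ((1 + x) ^ 2 - 4 * t) ^ (-(1:ℝ) / 2) *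
    (Set.indicator (Set.Ico (0:ℝ) x) 1 t
      + 2 * Set.indicator (Set.Ico x (((1 + x) / 2) ^ 2)) 1 t)

lemma gInt (x p q : ℝ) :
    IntervalIntegrable (fun t : ℝ => ((1+x)^2 - 4*t) ^ (-(1:ℝ)/2)) volume p q := by
  have h0 : IntervalIntegrable (fun z : ℝ => z ^ (-(1:ℝ)/2)) volume
      (4 * ((1+x)^2/4 - p)) (4 * ((1+x)^2/4 - q)) :=
    intervalIntegral.intervalIntegrable_rpow' (by norm_num)
  have h1 := (h0.comp_mul_left (c := 4) enorm_ne_top enorm_ne_top).comp_sub_left ((1+x)^2/4)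
  have he : (fun t : ℝ => ((1+x)^2 - 4*t) ^ (-(1:ℝ)/2))
      = fun t : ℝ => (4 * ((1+x)^2/4 - t)) ^ (-(1:ℝ)/2) := by
    funext t; congr 1; ring
  rw [he]
  convert h1 using 2 <;> ring

lemma gVal (x p q : ℝ) (hpq : p ≤ q) (hq : q ≤ ((1+x)/2)^2) :
    ∫ t in p..q, ((1+x)^2 - 4*t) ^ (-(1:ℝ)/2)
      = Real.sqrt (((1+x)/2)^2 - p) - Real.sqrt (((1+x)/2)^2 - q) := by
  have h1 : ∀ t : ℝ, (1+x)^2 - 4*t = 4 * (((1+x)/2)^2 - t) := fun t => by ring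
  simp only [h1]
  rw [intervalIntegral.integral_comp_sub_left (fun y : ℝ => (4*y) ^ (-(1:ℝ)/2)) (((1+x)/2)^2)]
  have hle : ((1+x)/2)^2 - q ≤ ((1+x)/2)^2 - p := by linarith
  have hcongr : EqOn (fun y : ℝ => (4*y) ^ (-(1:ℝ)/2))
      (fun y : ℝ => (4:ℝ) ^ (-(1:ℝ)/2) * y ^ (-(1:ℝ)/2))
      (Set.uIcc (((1+x)/2)^2 - q) (((1+x)/2)^2 - p)) := by
    intro y hy
    rw [Set.uIcc_of_le hle] at hy
    have hy0 : (0:ℝ) ≤ y := le_trans (by linarith) hy.1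
    exact Real.mul_rpow (by norm_num) hy0
  rw [intervalIntegral.integral_congr hcongr, intervalIntegral.integral_const_mul,
    integral_rpow (Or.inl (by norm_num))]
  have h4 : (4:ℝ) ^ (-(1:ℝ)/2) = 1/2 := by
    rw [show (-(1:ℝ)/2) = -(1/2) by norm_num, Real.rpow_neg (by norm_num),
      ← Real.sqrt_eq_rpow, show (4:ℝ) = 2^2 by norm_num, Real.sqrt_sq (by norm_num)]
    norm_num
  rw [h4, show (-(1:ℝ)/2 + 1) = 1/2 by norm_num, ← Real.sqrt_eq_rpow, ← Real.sqrt_eq_rpow]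
  ring

lemma keyL (x p q k : ℝ) (hpq : p ≤ q) (hq : q ≤ ((1+x)/2)^2) (hk : 0 ≤ k) :
    ∫⁻ t in Set.Icc p q, ENNReal.ofReal (k * (((1+x)^2 - 4*t) ^ (-(1:ℝ)/2)))
      = ENNReal.ofReal (k * (Real.sqrt (((1+x)/2)^2 - p) - Real.sqrt (((1+x)/2)^2 - q))) := by
  have hInt : IntegrableOn (fun t : ℝ => k * (((1+x)^2 - 4*t) ^ (-(1:ℝ)/2)))
      (Set.Icc p q) volume :=
    ((integrableOn_Icc_iff_integrableOn_Ioc enorm_ne_top).mpr (gInt x p q).1).const_mul k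
  have hnn : 0 ≤ᵐ[volume.restrict (Set.Icc p q)]
      fun t : ℝ => k * (((1+x)^2 - 4*t) ^ (-(1:ℝ)/2)) := by
    filter_upwards [ae_restrict_mem measurableSet_Icc] with t ht
    have hb : (0:ℝ) ≤ (1+x)^2 - 4*t := by nlinarith [ht.2]
    exact mul_nonneg hk (Real.rpow_nonneg hb _)
  rw [← ofReal_integral_eq_lintegral_ofReal hInt hnn, integral_Icc_eq_integral_Ioc,
    ← intervalIntegral.integral_of_le hpq, intervalIntegral.integral_const_mul,
    gVal x p q hpq hq]

lemma phi_eq_on1 (x t : ℝ) (h0 : 0 ≤ t) (htx : t < x) :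
    phi x t = 1 * (((1+x)^2 - 4*t) ^ (-(1:ℝ)/2)) := by
  have hnot : t ∉ Set.Ico x (((1+x)/2)^2) := fun h => absurd h.1 (not_le.mpr htx)
  simp only [phi, Set.indicator_of_mem (Set.mem_Ico.mpr ⟨h0, htx⟩),
    Set.indicator_of_notMem hnot, Pi.one_apply, mul_zero, add_zero, one_mul, mul_one]

lemma phi_eq_on2 (x t : ℝ) (hxt : x ≤ t) (htB : t < ((1+x)/2)^2) :
    phi x t = 2 * (((1+x)^2 - 4*t) ^ (-(1:ℝ)/2)) := by
  have hnot : t ∉ Set.Ico (0:ℝ) x := fun h => absurd h.2 (not_lt.mpr hxt)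
  simp only [phi, Set.indicator_of_notMem hnot,
    Set.indicator_of_mem (Set.mem_Ico.mpr ⟨hxt, htB⟩), Pi.one_apply, mul_one, zero_add]
  ring

lemma phi_eq_zero' (x t : ℝ) (hx : x ≤ ((1+x)/2)^2) (hBt : ((1+x)/2)^2 ≤ t) :
    phi x t = 0 := by
  have hnot1 : t ∉ Set.Ico (0:ℝ) x := fun h => absurd h.2 (not_lt.mpr (le_trans hx hBt))
  have hnot2 : t ∉ Set.Ico x (((1+x)/2)^2) := fun h => absurd h.2 (not_lt.mpr hBt)
  simp only [phi, Set.indicator_of_notMem hnot1, Set.indicator_of_notMem hnot2,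
    mul_zero, add_zero, zero_add]

lemma rhs1 (x a : ℝ) (hx0 : 0 ≤ x) (hx1 : x ≤ 1) (ha0 : 0 ≤ a) (hax : a < x) :
    ∫⁻ t in Set.Icc (0:ℝ) a, ENNReal.ofReal (phi x t)
      = ENNReal.ofReal ((1+x)/2 - Real.sqrt (((1+x)/2)^2 - a)) := by
  have hxB : x ≤ ((1+x)/2)^2 := by nlinarith [sq_nonneg (1 - x)]
  have h1 : ∫⁻ t in Set.Icc (0:ℝ) a, ENNReal.ofReal (phi x t)
      = ∫⁻ t in Set.Icc (0:ℝ) a, ENNReal.ofReal (1 * (((1+x)^2 - 4*t) ^ (-(1:ℝ)/2))) :=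
    setLIntegral_congr_fun measurableSet_Icc (fun t ht => by
      rw [phi_eq_on1 x t ht.1 (lt_of_le_of_lt ht.2 hax)])
  rw [h1, keyL x 0 a 1 ha0 (by linarith) zero_le_one]
  congr 1
  rw [sub_zero, Real.sqrt_sq (by linarith : (0:ℝ) ≤ (1+x)/2)]
  ring

lemma rhs2 (x a : ℝ) (hx0 : 0 ≤ x) (hx1 : x ≤ 1) (hxa : x ≤ a) (haB : a ≤ ((1+x)/2)^2) :
    ∫⁻ t in Set.Icc (0:ℝ) a, ENNReal.ofReal (phi x t)
      = ENNReal.ofReal x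
        + ENNReal.ofReal (2 * ((1-x)/2 - Real.sqrt (((1+x)/2)^2 - a))) := by
  have hxB : x ≤ ((1+x)/2)^2 := by nlinarith [sq_nonneg (1 - x)]
  have hBx : ((1+x)/2)^2 - x = ((1-x)/2)^2 := by ring
  have hsplit : Set.Icc (0:ℝ) a = Set.Ico 0 x ∪ Set.Icc x a := by
    ext t
    simp only [Set.mem_Icc, Set.mem_union, Set.mem_Ico]
    constructor
    · rintro ⟨h0, h1⟩
      rcases lt_or_ge t x with h | h
      · exact Or.inl ⟨h0, h⟩
      · exact Or.inr ⟨h, h1⟩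
    · rintro (⟨h0, h1⟩ | ⟨h0, h1⟩)
      · exact ⟨h0, by linarith⟩
      · exact ⟨by linarith, h1⟩
  have hdisj : Disjoint (Set.Ico (0:ℝ) x) (Set.Icc x a) := by
    rw [Set.disjoint_left]
    rintro t ⟨_, h1⟩ ⟨h2, _⟩
    exact absurd h2 (not_le.mpr h1)
  rw [hsplit, lintegral_union measurableSet_Icc hdisj]
  have hI1 : ∫⁻ t in Set.Ico (0:ℝ) x, ENNReal.ofReal (phi x t) = ENNReal.ofReal x := by
    have h1 : ∫⁻ t in Set.Ico (0:ℝ) x, ENNReal.ofReal (phi x t)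
        = ∫⁻ t in Set.Ico (0:ℝ) x, ENNReal.ofReal (1 * (((1+x)^2 - 4*t) ^ (-(1:ℝ)/2))) :=
      setLIntegral_congr_fun measurableSet_Ico (fun t ht => by
        rw [phi_eq_on1 x t ht.1 ht.2])
    rw [h1, setLIntegral_congr Ico_ae_eq_Icc, keyL x 0 x 1 hx0 hxB zero_le_one]
    congr 1
    rw [sub_zero, Real.sqrt_sq (by linarith : (0:ℝ) ≤ (1+x)/2), hBx,
      Real.sqrt_sq (by linarith : (0:ℝ) ≤ (1-x)/2)]
    ring
  have hI2 : ∫⁻ t in Set.Icc x a, ENNReal.ofReal (phi x t)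
      = ENNReal.ofReal (2 * ((1-x)/2 - Real.sqrt (((1+x)/2)^2 - a))) := by
    have h0 : ∫⁻ t in Set.Icc x a, ENNReal.ofReal (phi x t)
        = ∫⁻ t in Set.Ico x a, ENNReal.ofReal (phi x t) :=
      setLIntegral_congr (Ico_ae_eq_Icc (μ := volume) (a := x) (b := a)).symm
    have h1 : ∫⁻ t in Set.Ico x a, ENNReal.ofReal (phi x t)
        = ∫⁻ t in Set.Ico x a, ENNReal.ofReal (2 * (((1+x)^2 - 4*t) ^ (-(1:ℝ)/2))) :=
      setLIntegral_congr_fun measurableSet_Ico (fun t ht => by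
        rw [phi_eq_on2 x t ht.1 (lt_of_lt_of_le ht.2 haB)])
    rw [h0, h1, setLIntegral_congr Ico_ae_eq_Icc, keyL x x a 2 hxa haB (by norm_num)]
    congr 1
    rw [hBx, Real.sqrt_sq (by linarith : (0:ℝ) ≤ (1-x)/2)]
  rw [hI1, hI2]

/-- For every `x ∈ [0,1]`, the law of `U·x + U·(1−U)` (with `U` uniform on `[0,1]`)
is absolutely continuous with respect to Lebesgue measure on `[0,1]` with density `φ_x`. -/
theorem law_of_update_has_density (x : ℝ) (hx : x ∈ Set.Icc (0:ℝ) 1) :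
    Measure.map (fun u : ℝ => u * x + u * (1 - u)) (volume.restrict (Set.Icc (0:ℝ) 1))
      = (volume.restrict (Set.Icc (0:ℝ) 1)).withDensity
          (fun t => ENNReal.ofReal (phi x t)) := by
  obtain ⟨hx0, hx1⟩ := hx
  have hfm : Measurable fun u : ℝ => u * x + u * (1 - u) := by fun_prop
  have hxB : x ≤ ((1+x)/2)^2 := by nlinarith [sq_nonneg (1 - x)]
  have hB1 : ((1+x)/2)^2 ≤ 1 := by nlinarith
  have hC0 : (0:ℝ) ≤ (1+x)/2 := by linarith
  have hC1 : (1+x)/2 ≤ 1 := by linarith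
  have hss : ∀ a : ℝ, ((1+x)/2)^2 - a ≤ Real.sqrt (((1+x)/2)^2 - a) ^ 2 := by
    intro a
    rcases le_or_gt 0 (((1+x)/2)^2 - a) with h | h
    · rw [Real.sq_sqrt h]
    · exact le_trans h.le (sq_nonneg _)
  have hpre : ∀ a : ℝ, (fun u : ℝ => u * x + u * (1 - u)) ⁻¹' (Set.Iic a)
      = Set.Iic ((1+x)/2 - Real.sqrt (((1+x)/2)^2 - a))
        ∪ Set.Ici ((1+x)/2 + Real.sqrt (((1+x)/2)^2 - a)) := by
    intro a
    ext u
    have hid : u * x + u * (1 - u) = ((1+x)/2)^2 - (u - (1+x)/2)^2 := by ring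
    simp only [Set.mem_preimage, Set.mem_Iic, Set.mem_union, Set.mem_Ici, hid]
    constructor
    · intro h
      have h2 : Real.sqrt (((1+x)/2)^2 - a) ≤ |u - (1+x)/2| := by
        have := Real.sqrt_le_sqrt (show ((1+x)/2)^2 - a ≤ (u - (1+x)/2)^2 by linarith)
        rwa [Real.sqrt_sq_eq_abs] at this
      rcases le_abs.mp h2 with h3 | h3
      · right; linarith
      · left; linarith
    · intro h
      have h2 : ((1+x)/2)^2 - a ≤ (u - (1+x)/2)^2 := by
        rcases h with h | h
        · nlinarith [hss a, Real.sqrt_nonneg (((1+x)/2)^2 - a)]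
        · nlinarith [hss a, Real.sqrt_nonneg (((1+x)/2)^2 - a)]
      linarith
  haveI : IsFiniteMeasure
      ((volume.restrict (Set.Icc (0:ℝ) 1)).map (fun u : ℝ => u * x + u * (1 - u))) := by
    constructor
    rw [Measure.map_apply hfm MeasurableSet.univ, Set.preimage_univ,
      Measure.restrict_apply_univ, Real.volume_Icc]
    exact ENNReal.ofReal_lt_top
  refine Measure.ext_of_Iic _ _ (fun a => ?_)
  rw [Measure.map_apply hfm measurableSet_Iic,
    Measure.restrict_apply (hfm measurableSet_Iic),
    withDensity_apply _ measurableSet_Iic,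
    Measure.restrict_restrict measurableSet_Iic]
  rcases lt_or_ge a 0 with ha | ha0
  · -- a < 0
    have h1 : (fun u : ℝ => u * x + u * (1 - u)) ⁻¹' Set.Iic a ∩ Set.Icc (0:ℝ) 1 = ∅ := by
      refine Set.eq_empty_iff_forall_notMem.mpr fun u hu => ?_
      obtain ⟨hfu, h0u, h1u⟩ := hu
      have hfu' : u * x + u * (1 - u) ≤ a := hfu
      nlinarith [mul_nonneg h0u hx0, mul_nonneg h0u (by linarith : (0:ℝ) ≤ 1 - u)]
    have h2 : Set.Iic a ∩ Set.Icc (0:ℝ) 1 = ∅ := by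
      refine Set.eq_empty_iff_forall_notMem.mpr fun t ht => ?_
      obtain ⟨hta, h0t, _⟩ := ht
      have hta' : t ≤ a := hta
      linarith
    rw [h1, h2, measure_empty, Measure.restrict_empty, lintegral_zero_measure]
  rcases lt_or_ge a x with hax | hxa
  · -- 0 ≤ a < x
    have hsgt : (1-x)/2 < Real.sqrt (((1+x)/2)^2 - a) :=
      (Real.lt_sqrt (by linarith)).mpr (by nlinarith)
    have hsC : Real.sqrt (((1+x)/2)^2 - a) ≤ (1+x)/2 := by
      calc Real.sqrt (((1+x)/2)^2 - a) ≤ Real.sqrt (((1+x)/2)^2) :=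
            Real.sqrt_le_sqrt (by linarith)
        _ = (1+x)/2 := Real.sqrt_sq hC0
    have hs0 : (0:ℝ) ≤ Real.sqrt (((1+x)/2)^2 - a) := Real.sqrt_nonneg _
    have hset1 : (fun u : ℝ => u * x + u * (1 - u)) ⁻¹' Set.Iic a ∩ Set.Icc (0:ℝ) 1
        = Set.Icc 0 ((1+x)/2 - Real.sqrt (((1+x)/2)^2 - a)) := by
      rw [hpre a]
      ext u
      simp only [Set.mem_inter_iff, Set.mem_union, Set.mem_Iic, Set.mem_Ici, Set.mem_Icc]
      constructor
      · rintro ⟨h | h, h0, h1⟩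
        · exact ⟨h0, h⟩
        · exfalso; linarith
      · rintro ⟨h0, h⟩
        exact ⟨Or.inl h, h0, by linarith⟩
    have hset2 : Set.Iic a ∩ Set.Icc (0:ℝ) 1 = Set.Icc 0 a := by
      ext t
      simp only [Set.mem_inter_iff, Set.mem_Iic, Set.mem_Icc]
      constructor
      · rintro ⟨h1, h2, _⟩; exact ⟨h2, h1⟩
      · rintro ⟨h1, h2⟩; exact ⟨h2, h1, by linarith⟩
    rw [hset1, hset2, Real.volume_Icc, rhs1 x a hx0 hx1 ha0 hax]
    congr 1
    ring
  rcases lt_or_ge a (((1+x)/2)^2) with haB | hBa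
  · -- x ≤ a < B
    have hs0 : (0:ℝ) ≤ Real.sqrt (((1+x)/2)^2 - a) := Real.sqrt_nonneg _
    have hsle : Real.sqrt (((1+x)/2)^2 - a) ≤ (1-x)/2 := by
      calc Real.sqrt (((1+x)/2)^2 - a) ≤ Real.sqrt (((1+x)/2)^2 - x) :=
            Real.sqrt_le_sqrt (by linarith)
        _ = (1-x)/2 := by
            rw [show ((1+x)/2)^2 - x = ((1-x)/2)^2 by ring]
            exact Real.sqrt_sq (by linarith)
    have hspos : 0 < Real.sqrt (((1+x)/2)^2 - a) := Real.sqrt_pos.mpr (by linarith)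
    have hsC : Real.sqrt (((1+x)/2)^2 - a) ≤ (1+x)/2 := by linarith
    have hset1 : (fun u : ℝ => u * x + u * (1 - u)) ⁻¹' Set.Iic a ∩ Set.Icc (0:ℝ) 1
        = Set.Icc 0 ((1+x)/2 - Real.sqrt (((1+x)/2)^2 - a))
          ∪ Set.Icc ((1+x)/2 + Real.sqrt (((1+x)/2)^2 - a)) 1 := by
      rw [hpre a]
      ext u
      simp only [Set.mem_inter_iff, Set.mem_union, Set.mem_Iic, Set.mem_Ici, Set.mem_Icc]
      constructor
      · rintro ⟨h | h, h0, h1⟩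
        · exact Or.inl ⟨h0, h⟩
        · exact Or.inr ⟨h, h1⟩
      · rintro (⟨h0, h⟩ | ⟨h, h1⟩)
        · exact ⟨Or.inl h, h0, by linarith⟩
        · exact ⟨Or.inr h, by linarith, h1⟩
    have hset2 : Set.Iic a ∩ Set.Icc (0:ℝ) 1 = Set.Icc 0 a := by
      ext t
      simp only [Set.mem_inter_iff, Set.mem_Iic, Set.mem_Icc]
      constructor
      · rintro ⟨h1, h2, _⟩; exact ⟨h2, h1⟩
      · rintro ⟨h1, h2⟩; exact ⟨h2, h1, by linarith⟩
    have hdisj : Disjoint (Set.Icc (0:ℝ) ((1+x)/2 - Real.sqrt (((1+x)/2)^2 - a)))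
        (Set.Icc ((1+x)/2 + Real.sqrt (((1+x)/2)^2 - a)) 1) := by
      rw [Set.disjoint_left]
      rintro u ⟨_, h1⟩ ⟨h2, _⟩
      linarith
    rw [hset1, hset2, measure_union hdisj measurableSet_Icc, Real.volume_Icc,
      Real.volume_Icc, rhs2 x a hx0 hx1 hxa haB.le,
      ← ENNReal.ofReal_add (by linarith) (by linarith),
      ← ENNReal.ofReal_add (by linarith) (by linarith)]
    congr 1
    ring
  · -- B ≤ a
    have hset1 : (fun u : ℝ => u * x + u * (1 - u)) ⁻¹' Set.Iic a ∩ Set.Icc (0:ℝ) 1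
        = Set.Icc (0:ℝ) 1 := by
      ext u
      simp only [Set.mem_inter_iff, Set.mem_preimage, Set.mem_Iic, Set.mem_Icc]
      constructor
      · rintro ⟨_, h⟩; exact h
      · rintro ⟨h0, h1⟩
        refine ⟨?_, h0, h1⟩
        nlinarith [sq_nonneg (2*u - 1 - x)]
    have hS : MeasurableSet (Set.Iic a ∩ Set.Icc (0:ℝ) 1) :=
      measurableSet_Iic.inter measurableSet_Icc
    have hsub : Set.Icc (0:ℝ) (((1+x)/2)^2) ⊆ Set.Iic a ∩ Set.Icc (0:ℝ) 1 :=
      fun t ⟨h0, h1⟩ => ⟨le_trans h1 hBa, h0, le_trans h1 hB1⟩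
    have h2 : ∫⁻ t in (Set.Iic a ∩ Set.Icc (0:ℝ) 1) \ Set.Icc (0:ℝ) (((1+x)/2)^2),
        ENNReal.ofReal (phi x t) = 0 := by
      have hcz : ∫⁻ t in (Set.Iic a ∩ Set.Icc (0:ℝ) 1) \ Set.Icc (0:ℝ) (((1+x)/2)^2),
          ENNReal.ofReal (phi x t)
          = ∫⁻ _t in (Set.Iic a ∩ Set.Icc (0:ℝ) 1) \ Set.Icc (0:ℝ) (((1+x)/2)^2),
            (0:ℝ≥0∞) :=
        setLIntegral_congr_fun (hS.diff measurableSet_Icc) (fun t ht => ?_)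
      · rw [hcz, lintegral_zero]
      · obtain ⟨⟨hta, h0t, h1t⟩, hnot⟩ := ht
        have hBt : ((1+x)/2)^2 ≤ t := by
          by_contra h
          exact hnot ⟨h0t, le_of_not_gt fun hh => h (by linarith)⟩
        rw [phi_eq_zero' x t hxB hBt, ENNReal.ofReal_zero]
    rw [hset1, Real.volume_Icc, ← Set.union_diff_cancel hsub,
      lintegral_union (hS.diff measurableSet_Icc) Set.disjoint_sdiff_right, h2, add_zero,
      rhs2 x (((1+x)/2)^2) hx0 hx1 hxB le_rfl, sub_self, Real.sqrt_zero,
      ← ENNReal.ofReal_add hx0 (by linarith)]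
    congr 1
    ring
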